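/- Let n and w_1, …, w_n be positive integers, set d_w := lcm(w_1, …, w_n), let Q be a nonzero commutative ring, and let R = Q[x_1, …, x_n] be the polynomial ring graded by the weighted degree with deg(x_i) = w_i. Then the Veronese subring R^{(d_w)} is generated over R_0 = Q in degree 1 if and only if there is no w-bubble u with d_w dividing w·u. (Equivalently: every monomial whose weighted degree is a multiple k·d_w with k ≥ 2 is a product of k monomials of weighted degree d_w if and only if no w-bubble u satisfies d_w ∣ w·u.) -/

import Mathlib

/-- The weighted dot product `w · u = ∑ i, w i * u i`. -/
def dotW {n : ℕ} (w u : Fin n → ℕ) : ℕ := ∑ i, w i * u i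

/-- `d_w`, the least common multiple of the weights. -/
def lcmW {n : ℕ} (w : Fin n → ℕ) : ℕ := Finset.univ.lcm w

/-- `u` is a `w`-bubble: `w · u ≥ 2 d_w` and there is no `v ⪯ u` with `w · v = d_w`. -/
def IsBubble {n : ℕ} (w u : Fin n → ℕ) : Prop :=
  2 * lcmW w ≤ dotW w u ∧
    ¬ ∃ v : Fin n → ℕ, (∀ i, v i ≤ u i) ∧ dotW w v = lcmW w

lemma weight_eq_dotW {n : ℕ} (w : Fin n → ℕ) (U : Fin n →₀ ℕ) :
    Finsupp.weight w U = dotW w ⇑U := by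
  rw [Finsupp.weight_apply, Finsupp.sum_fintype]
  · simp [dotW, mul_comm]
  · intro; simp

lemma lcmW_pos {n : ℕ} (hn : 0 < n) (w : Fin n → ℕ) (hw : ∀ i, 0 < w i) : 0 < lcmW w := by
  rw [Nat.pos_iff_ne_zero]
  intro h
  rw [lcmW, Finset.lcm_eq_zero_iff] at h
  obtain ⟨i, -, hi⟩ := h
  exact (hw i).ne' hi

lemma monomial_finset_prod {ι σ R : Type*} [CommSemiring R] (s : Finset ι)
    (A : ι → (σ →₀ ℕ)) (c : ι → R) :
    ∏ j ∈ s, MvPolynomial.monomial (A j) (c j)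
      = MvPolynomial.monomial (∑ j ∈ s, A j) (∏ j ∈ s, c j) := by
  classical
  induction s using Finset.induction_on with
  | empty => simp
  | insert _ _ ha ih =>
    rw [Finset.prod_insert ha, Finset.sum_insert ha, Finset.prod_insert ha, ih,
      MvPolynomial.monomial_mul]

lemma decomp {n : ℕ} (w : Fin n → ℕ) (hw : ∀ i, 0 < w i)
    (hnb : ¬ ∃ u : Fin n → ℕ, IsBubble w u ∧ lcmW w ∣ dotW w u) :
    ∀ m : ℕ, ∀ u : Fin n → ℕ, dotW w u = lcmW w * m →
      ∃ a : Fin m → Fin n → ℕ, (∀ j, dotW w (a j) = lcmW w) ∧ ∀ i, u i = ∑ j, a j i := by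
  intro m
  induction m with
  | zero =>
    intro u hu
    refine ⟨Fin.elim0, fun j => j.elim0, fun i => ?_⟩
    simp only [Nat.mul_zero, dotW] at hu
    have := (Finset.sum_eq_zero_iff.mp hu) i (Finset.mem_univ i)
    have : u i = 0 := by
      rcases Nat.mul_eq_zero.mp this with h | h
      · exact absurd h (hw i).ne'
      · exact h
    simp [this]
  | succ m ih =>
    intro u hu
    rcases Nat.eq_zero_or_pos m with rfl | hm
    · exact ⟨fun _ => u, fun j => by simpa using hu, fun i => by simp⟩
    have hdvd : lcmW w ∣ dotW w u := ⟨m + 1, hu⟩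
    have h2 : 2 * lcmW w ≤ dotW w u := by
      rw [hu]
      have := Nat.mul_le_mul_left (lcmW w) (show 2 ≤ m + 1 by omega)
      omega
    have hv : ∃ v : Fin n → ℕ, (∀ i, v i ≤ u i) ∧ dotW w v = lcmW w := by
      by_contra hc
      exact hnb ⟨u, ⟨h2, hc⟩, hdvd⟩
    obtain ⟨v, hvle, hvd⟩ := hv
    set u' : Fin n → ℕ := fun i => u i - v i with hu'
    have hsum : dotW w u' + dotW w v = dotW w u := by
      rw [dotW, dotW, dotW, ← Finset.sum_add_distrib]
      apply Finset.sum_congr rfl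
      intro i _
      rw [← Nat.mul_add, Nat.sub_add_cancel (hvle i)]
    have hu'd : dotW w u' = lcmW w * m := by
      rw [hvd, hu, Nat.mul_succ] at hsum
      omega
    obtain ⟨a', ha'd, ha'⟩ := ih u' hu'd
    refine ⟨Fin.cons v a', ?_, ?_⟩
    · intro j
      refine Fin.cases ?_ ?_ j <;> simp [hvd, ha'd]
    · intro i
      rw [Fin.sum_univ_succ]
      simp only [Fin.cons_zero, Fin.cons_succ]
      have h1 := ha' i
      simp only [hu'] at h1
      have h2 := hvle i
      omega

theorem veronese_generated_iff_no_bubble {n : ℕ} (hn : 0 < n) (w : Fin n → ℕ)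
    (hw : ∀ i, 0 < w i) (Q : Type*) [CommRing Q] [Nontrivial Q] :
    (∀ m : ℕ, 1 ≤ m →
        ∀ x ∈ MvPolynomial.weightedHomogeneousSubmodule Q w (lcmW w * m),
          x ∈ AddSubgroup.closure
            { y : MvPolynomial (Fin n) Q | ∃ g : Fin m → MvPolynomial (Fin n) Q,
                (∀ j, g j ∈ MvPolynomial.weightedHomogeneousSubmodule Q w (lcmW w)) ∧
                y = ∏ j, g j }) ↔
      ¬ ∃ u : Fin n → ℕ, IsBubble w u ∧ lcmW w ∣ dotW w u := by
  classical
  have hd : 0 < lcmW w := lcmW_pos hn w hw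
  constructor
  · intro H
    rintro ⟨u, ⟨h2, hnov⟩, hdvd⟩
    obtain ⟨k, hk⟩ := hdvd
    have hk2 : 2 ≤ k := by
      rw [hk] at h2
      by_contra hlt
      have hk1 : k ≤ 1 := by omega
      have := Nat.mul_le_mul_left (lcmW w) hk1
      omega
    set U : Fin n →₀ ℕ := Finsupp.equivFunOnFinite.symm u with hU
    have hUc : ⇑U = u := rfl
    have hmem : (MvPolynomial.monomial U (1 : Q)) ∈
        MvPolynomial.weightedHomogeneousSubmodule Q w (lcmW w * k) := by
      rw [MvPolynomial.mem_weightedHomogeneousSubmodule]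
      exact MvPolynomial.isWeightedHomogeneous_monomial w U 1
        (by rw [weight_eq_dotW, hUc, ← hk])
    have hcl := H k (by omega) _ hmem
    let φ : MvPolynomial (Fin n) Q →+ Q :=
      AddMonoidHom.mk' (fun p => MvPolynomial.coeff U p)
        (fun a b => MvPolynomial.coeff_add U a b)
    have hker : AddSubgroup.closure
        { y : MvPolynomial (Fin n) Q | ∃ g : Fin k → MvPolynomial (Fin n) Q,
            (∀ j, g j ∈ MvPolynomial.weightedHomogeneousSubmodule Q w (lcmW w)) ∧
            y = ∏ j, g j } ≤ φ.ker := by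
      rw [AddSubgroup.closure_le]
      rintro y ⟨g, hg, rfl⟩
      rw [SetLike.mem_coe, AddMonoidHom.mem_ker]
      obtain ⟨k', rfl⟩ : ∃ k', k = k' + 1 := ⟨k - 1, by omega⟩
      show MvPolynomial.coeff U (∏ j, g j) = 0
      rw [Fin.prod_univ_succ, MvPolynomial.coeff_mul]
      apply Finset.sum_eq_zero
      rintro ⟨a, b⟩ hab
      rw [Finset.HasAntidiagonal.mem_antidiagonal] at hab
      have ha0 : MvPolynomial.coeff a (g 0) = 0 := by
        by_contra hco
        have hwa : Finsupp.weight w a = lcmW w := by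
          by_contra hne
          exact hco
            (((MvPolynomial.mem_weightedHomogeneousSubmodule Q w _ _).mp (hg 0)).coeff_eq_zero
              a hne)
        refine hnov ⟨⇑a, fun i => ?_, ?_⟩
        · have : a i + b i = u i := by
            rw [← hUc, ← hab]; simp
          omega
        · rw [← weight_eq_dotW, hwa]
      rw [ha0, zero_mul]
    have hz := hker hcl
    rw [AddMonoidHom.mem_ker] at hz
    have : MvPolynomial.coeff U (MvPolynomial.monomial U (1 : Q)) = 0 := hz
    rw [MvPolynomial.coeff_monomial, if_pos rfl] at this
    exact one_ne_zero this
  · intro hnb m hm x hx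
    rw [← MvPolynomial.support_sum_monomial_coeff x]
    apply AddSubgroup.sum_mem
    intro U hU
    apply AddSubgroup.subset_closure
    have hco : MvPolynomial.coeff U x ≠ 0 := MvPolynomial.mem_support_iff.mp hU
    have hdeg : Finsupp.weight w U = lcmW w * m :=
      (MvPolynomial.mem_weightedHomogeneousSubmodule Q w _ _).mp hx hco
    obtain ⟨a, had, hsum⟩ := decomp w hw hnb m ⇑U (by rw [← weight_eq_dotW]; exact hdeg)
    refine ⟨fun j => MvPolynomial.monomial (Finsupp.equivFunOnFinite.symm (a j))
      (if j = (⟨0, hm⟩ : Fin m) then MvPolynomial.coeff U x else 1), fun j => ?_, ?_⟩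
    · rw [MvPolynomial.mem_weightedHomogeneousSubmodule]
      apply MvPolynomial.isWeightedHomogeneous_monomial
      rw [weight_eq_dotW]; show dotW w (a j) = lcmW w
      exact had j
    · have hUeq : U = ∑ j, Finsupp.equivFunOnFinite.symm (a j) := by
        ext i
        rw [Finsupp.finset_sum_apply]
        simpa using hsum i
      rw [monomial_finset_prod, ← hUeq, Finset.prod_ite_eq']
      simp
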